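/- arXiv:1601.05468 — 2 statements merged into one kernel-verified Lean document; each statement's English description precedes it below -/
import Mathlib

section
/- Let A = {a_0, a_1, a_2, a_3} ⊂ ℤ² be a nondegenerate planar circuit, f ∈ (ℂ∖{0})^4, and θ ∈ T² such that no two of the four unit numbers f̂_0(θ), f̂_1(θ), f̂_2(θ), f̂_3(θ) are antipodal (f̂_j(θ) ≠ −f̂_k(θ) for j ≠ k), and suppose f is not colopsided at θ. Then exactly two of the four truncated trinomials f_{k̂}(z) = Σ_{j≠k} f_j z^{a_j}, k = 0,1,2,3, are colopsided at θ. -/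
open MeasureTheory Complex

noncomputable section

instance : Fact (0 < 2 * Real.pi) := ⟨by positivity⟩

/-- The real `n`-torus `(ℝ/2πℤ)ⁿ`, carrying the Haar measure of total mass `(2π)ⁿ`. -/
abbrev Torus (n : ℕ) := Fin n → AddCircle (2 * Real.pi)

/-- Projection `ℝⁿ → Tⁿ`. -/
def toTorus {n : ℕ} (θ : Fin n → ℝ) : Torus n := fun i => (θ i : AddCircle (2 * Real.pi))

/-- The Laurent monomial `z ↦ z^a`. -/
def lmon {n : ℕ} (a : Fin n → ℤ) (z : Fin n → ℂ) : ℂ := ∏ i, z i ^ a i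

/-- Evaluation of `Σ_k f_k z^{a_k}`. -/
def evalPoly {n N : ℕ} (a : Fin N → Fin n → ℤ) (f : Fin N → ℂ) (z : Fin n → ℂ) : ℂ :=
  ∑ k, f k * lmon (a k) z

/-- The coamoeba of a function `F` on `(ℂ∖{0})ⁿ`: the image of its zero set under the
componentwise argument mapping, viewed in the torus `(ℝ/2πℤ)ⁿ`. -/
def coamoebaF {n : ℕ} (F : (Fin n → ℂ) → ℂ) : Set (Torus n) :=
  { θ | ∃ z : Fin n → ℂ, (∀ i, z i ≠ 0) ∧ F z = 0 ∧ θ = toTorus fun i => (z i).arg }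

/-- The coamoeba of `Σ_k f_k z^{a_k}`. -/
def coamoeba {n N : ℕ} (a : Fin N → Fin n → ℤ) (f : Fin N → ℂ) : Set (Torus n) :=
  coamoebaF (evalPoly a f)

/-- The matrix `Â` with `k`-th column `(1, a_k)`. -/
def hatA {n : ℕ} (a : Fin (n + 2) → Fin n → ℤ) : Matrix (Fin (n + 1)) (Fin (n + 2)) ℤ :=
  fun i k => Fin.cases 1 (fun i' => a k i') i

/-- The Gale dual `b_k = (−1)^k det(A_k)`, where `A_k` is `Â` with column `k` deleted. -/
def galeB {n : ℕ} (a : Fin (n + 2) → Fin n → ℤ) (k : Fin (n + 2)) : ℤ :=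
  (-1) ^ (k : ℕ) * Matrix.det (Matrix.of fun i j => hatA a i (k.succAbove j))

/-- A nondegenerate circuit: all maximal minors of `Â` are nonvanishing, i.e. every
`n+1` of the `n+2` points affinely span `ℝⁿ`. -/
def NondegCircuit {n : ℕ} (a : Fin (n + 2) → Fin n → ℤ) : Prop :=
  ∀ k, galeB a k ≠ 0

/-- The normalized volume `Vol(A) = Σ_{k : b_k > 0} b_k`. -/
def volA {n : ℕ} (a : Fin (n + 2) → Fin n → ℤ) : ℤ :=
  ∑ k ∈ Finset.univ.filter (fun k => 0 < galeB a k), galeB a k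

/-- The `A`-discriminant binomial associated to a Gale dual vector `b`:
`Δ(x) = Π_{b_k>0} b_k^{b_k} · Π_{b_k<0} x_k^{−b_k} − Π_{b_k<0} b_k^{−b_k} · Π_{b_k>0} x_k^{b_k}`. -/
def discA {n : ℕ} {K : Type*} [Field K] (b : Fin (n + 2) → ℤ) (x : Fin (n + 2) → K) : K :=
  (∏ k ∈ Finset.univ.filter (fun k => 0 < b k), (b k : K) ^ b k) *
    (∏ k ∈ Finset.univ.filter (fun k => b k < 0), x k ^ (-b k)) -
  (∏ k ∈ Finset.univ.filter (fun k => b k < 0), (b k : K) ^ (-b k)) *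
    (∏ k ∈ Finset.univ.filter (fun k => 0 < b k), x k ^ b k)

/-- `f̂(θ) = (c/|c|)·e^{i⟨a,θ⟩}` for a monomial with coefficient `c` and exponent `a`. -/
def fhat {n : ℕ} (a : Fin n → ℤ) (c : ℂ) (θ : Fin n → ℝ) : ℂ :=
  (c / ((‖c‖ : ℝ) : ℂ)) * Complex.exp ((∑ i, (a i : ℝ) * θ i) * Complex.I)

/-- Colopsidedness of `Σ_{k ∈ s} f_k z^{a_k}` at `θ`: all rotated coefficients can be turned
into the closed right half plane, with at least one in the open right half plane. -/
def ColopsidedOn {n N : ℕ} (a : Fin N → Fin n → ℤ) (f : Fin N → ℂ) (s : Finset (Fin N))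
    (θ : Fin n → ℝ) : Prop :=
  ∃ φ : ℝ,
    (∀ k ∈ s, 0 ≤ (Complex.exp (φ * Complex.I) * f k *
      Complex.exp ((∑ i, (a k i : ℝ) * θ i) * Complex.I)).re) ∧
    ∃ k ∈ s, 0 < (Complex.exp (φ * Complex.I) * f k *
      Complex.exp ((∑ i, (a k i : ℝ) * θ i) * Complex.I)).re

/-- A list of monomials (coefficient-exponent pairs) is real at `θ` if all the rotated
coefficients lie on one real line through the origin of `ℂ`. -/
def RealAtMons {n : ℕ} (mons : List (ℂ × (Fin n → ℤ))) (θ : Fin n → ℝ) : Prop :=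
  ∃ w : ℂ, w ≠ 0 ∧ ∀ m ∈ mons, ∃ t : ℝ,
    m.1 * Complex.exp ((∑ i, (m.2 i : ℝ) * θ i) * Complex.I) = (t : ℂ) * w

/-- `Σ_k f_k z^{a_k}` is real at `θ` if all the numbers `f_k e^{i⟨a_k,θ⟩}` lie on one
real line through the origin of `ℂ`. -/
def RealAtIdx {n N : ℕ} (a : Fin N → Fin n → ℤ) (f : Fin N → ℂ) (θ : Fin n → ℝ) : Prop :=
  ∃ w : ℂ, w ≠ 0 ∧ ∀ k, ∃ t : ℝ,
    f k * Complex.exp ((∑ i, (a k i : ℝ) * θ i) * Complex.I) = (t : ℂ) * w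

/-- Arguments of critical points of `Σ f_k z^{a_k}`: points of the torus that are
componentwise arguments of some `z ∈ (ℂ∖{0})ⁿ` with `z_j·∂_j f(z) = 0` for all `j`. -/
def critArgs {n N : ℕ} (a : Fin N → Fin n → ℤ) (f : Fin N → ℂ) : Set (Torus n) :=
  { θ | ∃ z : Fin n → ℂ, (∀ i, z i ≠ 0) ∧
      (∀ j, (∑ k, (a k j : ℂ) * f k * lmon (a k) z) = 0) ∧ θ = toTorus fun i => (z i).arg }

/-- The first polynomial `F₁(z) = f₁ z^{a_0} + z^{a_2} + f₂ z^{a_3}` of a circuit system,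
with `f = (f₁, f₂, f₃, f₄)`. -/
def sysF1 (a : Fin 4 → Fin 2 → ℤ) (f : Fin 4 → ℂ) (z : Fin 2 → ℂ) : ℂ :=
  f 0 * lmon (a 0) z + lmon (a 2) z + f 1 * lmon (a 3) z

/-- The second polynomial `F₂(z) = f₃ z^{a_1} + z^{a_2} + f₄ z^{a_3}` of a circuit system,
with `f = (f₁, f₂, f₃, f₄)`. -/
def sysF2 (a : Fin 4 → Fin 2 → ℤ) (f : Fin 4 → ℂ) (z : Fin 2 → ℂ) : ℂ :=
  f 2 * lmon (a 1) z + lmon (a 2) z + f 3 * lmon (a 3) z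

/-- The real points of a lattice configuration, as a subset of `ℝⁿ`. -/
def realPts {n N : ℕ} (a : Fin N → Fin n → ℤ) : Set (Fin n → ℝ) :=
  Set.range fun k => fun i => (a k i : ℝ)

end

namespace TwoTrunc

open Complex Finset

/-- Angular version of colopsidedness. -/
def AngColop (t : Fin 4 → ℝ) (s : Finset (Fin 4)) : Prop :=
  ∃ φ : ℝ, (∀ k ∈ s, 0 ≤ Real.cos (φ + t k)) ∧ ∃ k ∈ s, 0 < Real.cos (φ + t k)

lemma re_exp_mul (φ : ℝ) (u : ℂ) :
    (Complex.exp (φ * Complex.I) * u).re = ‖u‖ * Real.cos (φ + u.arg) := by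
  have h : Complex.exp (φ * Complex.I) * u
      = ((‖u‖ : ℝ) : ℂ) * Complex.exp ((↑(φ + u.arg) : ℝ) * Complex.I) := by
    conv_lhs => rw [← Complex.norm_mul_exp_arg_mul_I u]
    rw [Complex.ofReal_add, add_mul, Complex.exp_add]
    ring
  rw [h, Complex.re_ofReal_mul, Complex.exp_ofReal_mul_I_re]

lemma colop_iff (a : Fin 4 → Fin 2 → ℤ) (f : Fin 4 → ℂ) (hf : ∀ k, f k ≠ 0)
    (θ : Fin 2 → ℝ) (s : Finset (Fin 4)) :
    ColopsidedOn a f s θ ↔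
      AngColop (fun k => (f k * Complex.exp ((∑ i, (a k i : ℝ) * θ i) * Complex.I)).arg) s := by
  have hu : ∀ k, f k * Complex.exp ((∑ i, (a k i : ℝ) * θ i) * Complex.I) ≠ 0 :=
    fun k => mul_ne_zero (hf k) (Complex.exp_ne_zero _)
  unfold ColopsidedOn AngColop
  apply exists_congr; intro φ
  have key : ∀ k : Fin 4, (Complex.exp (φ * Complex.I) * f k *
      Complex.exp ((∑ i, (a k i : ℝ) * θ i) * Complex.I)).re
      = ‖f k * Complex.exp ((∑ i, (a k i : ℝ) * θ i) * Complex.I)‖ *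
        Real.cos (φ + (f k * Complex.exp ((∑ i, (a k i : ℝ) * θ i) * Complex.I)).arg) := by
    intro k; rw [mul_assoc]; exact re_exp_mul φ _
  refine and_congr (forall₂_congr fun k hk => ?_)
    (exists_congr fun k => and_congr_right fun hk => ?_)
  · rw [key k, mul_nonneg_iff_of_pos_left (norm_pos_iff.mpr (hu k))]
  · rw [key k, mul_pos_iff_of_pos_left (norm_pos_iff.mpr (hu k))]

lemma fhat_eq (a : Fin 2 → ℤ) (c : ℂ) (hc : c ≠ 0) (θ : Fin 2 → ℝ) :
    fhat a c θ = Complex.exp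
      (((c * Complex.exp ((∑ i, (a i : ℝ) * θ i) * Complex.I)).arg : ℝ) * Complex.I) := by
  set u := c * Complex.exp ((∑ i, (a i : ℝ) * θ i) * Complex.I) with hu
  have hune : u ≠ 0 := mul_ne_zero hc (Complex.exp_ne_zero _)
  have habs : ‖u‖ = ‖c‖ := by
    rw [hu, norm_mul, Complex.norm_exp_ofReal_mul_I, mul_one]
  unfold fhat
  rw [div_mul_eq_mul_div, ← hu, ← habs, eq_comm,
    eq_div_iff (by exact_mod_cast (norm_ne_zero_iff.mpr hune) : ((‖u‖ : ℝ) : ℂ) ≠ 0),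
    mul_comm]
  exact Complex.norm_mul_exp_arg_mul_I u

lemma anti_of_diff_pi {x y : ℝ} (h : x - y = Real.pi) :
    Complex.exp ((x : ℝ) * Complex.I) = -Complex.exp ((y : ℝ) * Complex.I) := by
  have hx : x = y + Real.pi := by linarith
  rw [hx, Complex.ofReal_add, add_mul, Complex.exp_add, Complex.exp_pi_mul_I]
  ring

lemma cos_pos' {c x : ℝ} (r : ℝ) (h1 : -(Real.pi / 2) < c + r) (h2 : c + r < Real.pi / 2)
    (hx : r = x ∨ r = x + 2 * Real.pi ∨ r = x - 2 * Real.pi) : 0 < Real.cos (c + x) := by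
  have h : 0 < Real.cos (c + r) := Real.cos_pos_of_mem_Ioo ⟨h1, h2⟩
  rcases hx with rfl | rfl | rfl
  · exact h
  · rwa [show c + (x + 2 * Real.pi) = c + x + 2 * Real.pi by ring, Real.cos_add_two_pi] at h
  · rwa [show c + (x - 2 * Real.pi) = c + x - 2 * Real.pi by ring, Real.cos_sub_two_pi] at h

lemma angColop_of_bounds (t : Fin 4 → ℝ) (s : Finset (Fin 4)) (hs : s.Nonempty) (c : ℝ)
    (h : ∀ k ∈ s, 0 < Real.cos (c + t k)) : AngColop t s :=
  ⟨c, fun k hk => (h k hk).le, hs.choose, hs.choose_spec, h _ hs.choose_spec⟩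

lemma decomp (x : ℝ) (hx : 0 ≤ Real.cos x) :
    ∃ m : ℤ, -(Real.pi / 2) ≤ x - m * (2 * Real.pi) ∧ x - m * (2 * Real.pi) ≤ Real.pi / 2 := by
  have hpi := Real.pi_pos
  set m := round (x / (2 * Real.pi)) with hm
  have hcos : Real.cos (x - m * (2 * Real.pi)) = Real.cos x :=
    Real.cos_sub_int_mul_two_pi x m
  have habs : |x / (2 * Real.pi) - m| ≤ 1 / 2 := abs_sub_round _
  have hyabs : |x - m * (2 * Real.pi)| ≤ Real.pi := by
    have h2 : x - m * (2 * Real.pi) = (x / (2 * Real.pi) - m) * (2 * Real.pi) := by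
      field_simp
    rw [h2, abs_mul, abs_of_pos (by linarith : (0:ℝ) < 2 * Real.pi)]
    nlinarith [abs_nonneg (x / (2 * Real.pi) - (m : ℝ))]
  rw [abs_le] at hyabs
  refine ⟨m, ?_, ?_⟩
  · by_contra h
    push_neg at h
    have : Real.cos (-(x - m * (2 * Real.pi))) < 0 :=
      Real.cos_neg_of_pi_div_two_lt_of_lt (by linarith) (by linarith)
    rw [Real.cos_neg, hcos] at this; linarith
  · by_contra h
    push_neg at h
    have : Real.cos (x - m * (2 * Real.pi)) < 0 :=
      Real.cos_neg_of_pi_div_two_lt_of_lt (by linarith) (by linarith)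
    rw [hcos] at this; linarith

lemma neg_core {r1 r2 r3 φ : ℝ} (h1 : r1 ≤ r2) (h12 : r2 - r1 < Real.pi)
    (h23 : r3 - r2 < Real.pi) (h13 : Real.pi < r3 - r1) (h13' : r3 - r1 < 2 * Real.pi)
    (c1 : 0 ≤ Real.cos (φ + r1)) (c2 : 0 ≤ Real.cos (φ + r2))
    (c3 : 0 ≤ Real.cos (φ + r3)) : False := by
  have hpi := Real.pi_pos
  obtain ⟨m1, a1, b1⟩ := decomp _ c1
  obtain ⟨m2, a2, b2⟩ := decomp _ c2
  obtain ⟨m3, a3, b3⟩ := decomp _ c3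
  have e21 : m2 = m1 := by
    have hlt : ((m2 - m1 : ℤ) : ℝ) * (2 * Real.pi) < 1 * (2 * Real.pi) := by
      push_cast; nlinarith
    have hgt : (-1 : ℝ) * (2 * Real.pi) < ((m2 - m1 : ℤ) : ℝ) * (2 * Real.pi) := by
      push_cast; nlinarith
    have h1' : (m2 - m1 : ℤ) < 1 := by
      exact_mod_cast lt_of_mul_lt_mul_right hlt (by linarith : (0:ℝ) ≤ 2 * Real.pi)
    have h2' : (-1 : ℤ) < m2 - m1 := by
      exact_mod_cast lt_of_mul_lt_mul_right hgt (by linarith : (0:ℝ) ≤ 2 * Real.pi)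
    omega
  have e31 : m3 = m1 + 1 := by
    have hlt : ((m3 - m1 : ℤ) : ℝ) * (2 * Real.pi) < 2 * (2 * Real.pi) := by
      push_cast; nlinarith
    have hgt : (0 : ℝ) * (2 * Real.pi) < ((m3 - m1 : ℤ) : ℝ) * (2 * Real.pi) := by
      push_cast; nlinarith
    have h1' : (m3 - m1 : ℤ) < 2 := by
      exact_mod_cast lt_of_mul_lt_mul_right hlt (by linarith : (0:ℝ) ≤ 2 * Real.pi)
    have h2' : (0 : ℤ) < m3 - m1 := by
      exact_mod_cast lt_of_mul_lt_mul_right hgt (by linarith : (0:ℝ) ≤ 2 * Real.pi)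
    omega
  subst e21 e31
  push_cast at a3
  linarith

lemma angColop_reindex (t : Fin 4 → ℝ) (σ : Equiv.Perm (Fin 4)) (s : Finset (Fin 4)) :
    AngColop (t ∘ σ) s ↔ AngColop t (s.image σ) := by
  unfold AngColop
  apply exists_congr; intro φ
  constructor
  · rintro ⟨hall, k, hk, h2⟩
    refine ⟨fun j hj => ?_, σ k, Finset.mem_image_of_mem _ hk, h2⟩
    obtain ⟨j', hj', rfl⟩ := Finset.mem_image.mp hj
    exact hall j' hj'
  · rintro ⟨hall, k, hk, h2⟩
    obtain ⟨k', hk', rfl⟩ := Finset.mem_image.mp hk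
    exact ⟨fun j hj => hall (σ j) (Finset.mem_image_of_mem _ hj), k', hk', h2⟩

lemma image_erase_univ (σ : Equiv.Perm (Fin 4)) (k : Fin 4) :
    (Finset.univ.erase k).image σ = Finset.univ.erase (σ k) := by
  ext j
  simp only [Finset.mem_image, Finset.mem_erase, Finset.mem_univ, and_true]
  constructor
  · rintro ⟨j', hj', rfl⟩
    exact fun h => hj' (σ.injective h)
  · intro hj
    exact ⟨σ.symm j, fun h => hj (by rw [← h, Equiv.apply_symm_apply]),
      Equiv.apply_symm_apply _ _⟩

lemma core (t : Fin 4 → ℝ) (hmono : Monotone t)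
    (hrange : ∀ k, t k ∈ Set.Ioc (-Real.pi) Real.pi)
    (hanti : ∀ j k : Fin 4, j ≠ k → t j - t k ≠ Real.pi)
    (hnl : ¬ AngColop t Finset.univ) :
    ∃ i j : Fin 4, i ≠ j ∧
      ∀ k, (AngColop t (Finset.univ.erase k) ↔ (k = i ∨ k = j)) := by
  have hpi := Real.pi_pos
  have h01 : t 0 ≤ t 1 := hmono (by decide)
  have h12 : t 1 ≤ t 2 := hmono (by decide)
  have h23 : t 2 ≤ t 3 := hmono (by decide)
  obtain ⟨hr0a, hr0b⟩ := hrange 0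
  obtain ⟨hr1a, hr1b⟩ := hrange 1
  obtain ⟨hr2a, hr2b⟩ := hrange 2
  obtain ⟨hr3a, hr3b⟩ := hrange 3
  have hE : t 3 - t 0 < 2 * Real.pi := by linarith
  -- gap bounds
  have hg01 : t 1 - t 0 < Real.pi := by
    rcases lt_or_ge (t 1 - t 0) Real.pi with h | h
    · exact h
    exfalso
    have hgt : Real.pi < t 1 - t 0 := lt_of_le_of_ne h (Ne.symm (hanti 1 0 (by decide)))
    apply hnl
    apply angColop_of_bounds t Finset.univ ⟨0, Finset.mem_univ 0⟩ (-((t 1 + (t 0 + 2 * Real.pi)) / 2))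
    intro k _; fin_cases k
    · exact cos_pos' (t 0 + 2 * Real.pi) (by linarith) (by linarith) (Or.inr (Or.inl rfl))
    · exact cos_pos' (t 1) (by linarith) (by linarith) (Or.inl rfl)
    · exact cos_pos' (t 2) (by linarith) (by linarith) (Or.inl rfl)
    · exact cos_pos' (t 3) (by linarith) (by linarith) (Or.inl rfl)
  have hg12 : t 2 - t 1 < Real.pi := by
    rcases lt_or_ge (t 2 - t 1) Real.pi with h | h
    · exact h
    exfalso
    have hgt : Real.pi < t 2 - t 1 := lt_of_le_of_ne h (Ne.symm (hanti 2 1 (by decide)))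
    apply hnl
    apply angColop_of_bounds t Finset.univ ⟨0, Finset.mem_univ 0⟩ (-((t 2 + (t 1 + 2 * Real.pi)) / 2))
    intro k _; fin_cases k
    · exact cos_pos' (t 0 + 2 * Real.pi) (by linarith) (by linarith) (Or.inr (Or.inl rfl))
    · exact cos_pos' (t 1 + 2 * Real.pi) (by linarith) (by linarith) (Or.inr (Or.inl rfl))
    · exact cos_pos' (t 2) (by linarith) (by linarith) (Or.inl rfl)
    · exact cos_pos' (t 3) (by linarith) (by linarith) (Or.inl rfl)
  have hg23 : t 3 - t 2 < Real.pi := by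
    rcases lt_or_ge (t 3 - t 2) Real.pi with h | h
    · exact h
    exfalso
    have hgt : Real.pi < t 3 - t 2 := lt_of_le_of_ne h (Ne.symm (hanti 3 2 (by decide)))
    apply hnl
    apply angColop_of_bounds t Finset.univ ⟨0, Finset.mem_univ 0⟩ (-((t 3 + (t 2 + 2 * Real.pi)) / 2))
    intro k _; fin_cases k
    · exact cos_pos' (t 0 + 2 * Real.pi) (by linarith) (by linarith) (Or.inr (Or.inl rfl))
    · exact cos_pos' (t 1 + 2 * Real.pi) (by linarith) (by linarith) (Or.inr (Or.inl rfl))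
    · exact cos_pos' (t 2 + 2 * Real.pi) (by linarith) (by linarith) (Or.inr (Or.inl rfl))
    · exact cos_pos' (t 3) (by linarith) (by linarith) (Or.inl rfl)
  have hg30 : Real.pi < t 3 - t 0 := by
    rcases lt_or_ge Real.pi (t 3 - t 0) with h | h
    · exact h
    exfalso
    have hlt : t 3 - t 0 < Real.pi := lt_of_le_of_ne h (hanti 3 0 (by decide))
    apply hnl
    apply angColop_of_bounds t Finset.univ ⟨0, Finset.mem_univ 0⟩ (-((t 0 + t 3) / 2))
    intro k _; fin_cases k
    · exact cos_pos' (t 0) (by linarith) (by linarith) (Or.inl rfl)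
    · exact cos_pos' (t 1) (by linarith) (by linarith) (Or.inl rfl)
    · exact cos_pos' (t 2) (by linarith) (by linarith) (Or.inl rfl)
    · exact cos_pos' (t 3) (by linarith) (by linarith) (Or.inl rfl)
  have t0lt2 : t 0 < t 2 := by linarith
  have t1lt3 : t 1 < t 3 := by linarith
  -- the two decisive quantities
  rcases (hanti 3 1 (by decide) : t 3 - t 1 ≠ Real.pi).lt_or_gt with h13 | h13 <;>
    rcases (hanti 2 0 (by decide) : t 2 - t 0 ≠ Real.pi).lt_or_gt with h20 | h20
  · -- t3 - t1 < π, t2 - t0 < π : colopsided are {0, 3}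
    have hP0 : AngColop t (Finset.univ.erase 0) := by
      apply angColop_of_bounds t _ ⟨1, by decide⟩ (-((t 1 + t 3) / 2))
      intro k hk; fin_cases hk
      · exact cos_pos' (t 1) (by linarith) (by linarith) (Or.inl rfl)
      · exact cos_pos' (t 2) (by linarith) (by linarith) (Or.inl rfl)
      · exact cos_pos' (t 3) (by linarith) (by linarith) (Or.inl rfl)
    have hP3 : AngColop t (Finset.univ.erase 3) := by
      apply angColop_of_bounds t _ ⟨0, by decide⟩ (-((t 0 + t 2) / 2))
      intro k hk; fin_cases hk
      · exact cos_pos' (t 0) (by linarith) (by linarith) (Or.inl rfl)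
      · exact cos_pos' (t 1) (by linarith) (by linarith) (Or.inl rfl)
      · exact cos_pos' (t 2) (by linarith) (by linarith) (Or.inl rfl)
    have hN1 : ¬ AngColop t (Finset.univ.erase 1) := by
      rintro ⟨φ, hall, -⟩
      have c0 := hall 0 (by decide)
      have c2 := hall 2 (by decide)
      have c3 := hall 3 (by decide)
      have c2' : 0 ≤ Real.cos (φ + (t 2 - 2 * Real.pi)) := by
        rwa [show φ + (t 2 - 2 * Real.pi) = φ + t 2 - 2 * Real.pi by ring,
          Real.cos_sub_two_pi]
      have c3' : 0 ≤ Real.cos (φ + (t 3 - 2 * Real.pi)) := by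
        rwa [show φ + (t 3 - 2 * Real.pi) = φ + t 3 - 2 * Real.pi by ring,
          Real.cos_sub_two_pi]
      exact neg_core (r1 := t 2 - 2 * Real.pi) (r2 := t 3 - 2 * Real.pi) (r3 := t 0)
        (by linarith) (by linarith) (by linarith) (by linarith) (by linarith) c2' c3' c0
    have hN2 : ¬ AngColop t (Finset.univ.erase 2) := by
      rintro ⟨φ, hall, -⟩
      exact neg_core (r1 := t 0) (r2 := t 1) (r3 := t 3) h01 hg01 h13 hg30 hE
        (hall 0 (by decide)) (hall 1 (by decide)) (hall 3 (by decide))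
    refine ⟨0, 3, by decide, fun k => ?_⟩
    fin_cases k
    · exact iff_of_true hP0 (by decide)
    · exact iff_of_false hN1 (by decide)
    · exact iff_of_false hN2 (by decide)
    · exact iff_of_true hP3 (by decide)
  · -- t3 - t1 < π, t2 - t0 > π : colopsided are {0, 1}
    have hP0 : AngColop t (Finset.univ.erase 0) := by
      apply angColop_of_bounds t _ ⟨1, by decide⟩ (-((t 1 + t 3) / 2))
      intro k hk; fin_cases hk
      · exact cos_pos' (t 1) (by linarith) (by linarith) (Or.inl rfl)
      · exact cos_pos' (t 2) (by linarith) (by linarith) (Or.inl rfl)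
      · exact cos_pos' (t 3) (by linarith) (by linarith) (Or.inl rfl)
    have hP1 : AngColop t (Finset.univ.erase 1) := by
      apply angColop_of_bounds t _ ⟨0, by decide⟩ (-((t 2 - 2 * Real.pi + t 0) / 2))
      intro k hk; fin_cases hk
      · exact cos_pos' (t 0) (by linarith) (by linarith) (Or.inl rfl)
      · exact cos_pos' (t 2 - 2 * Real.pi) (by linarith) (by linarith) (Or.inr (Or.inr rfl))
      · exact cos_pos' (t 3 - 2 * Real.pi) (by linarith) (by linarith) (Or.inr (Or.inr rfl))
    have hN2 : ¬ AngColop t (Finset.univ.erase 2) := by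
      rintro ⟨φ, hall, -⟩
      exact neg_core (r1 := t 0) (r2 := t 1) (r3 := t 3) h01 hg01 h13 hg30 hE
        (hall 0 (by decide)) (hall 1 (by decide)) (hall 3 (by decide))
    have hN3 : ¬ AngColop t (Finset.univ.erase 3) := by
      rintro ⟨φ, hall, -⟩
      exact neg_core (r1 := t 0) (r2 := t 1) (r3 := t 2) h01 hg01 hg12 h20 (by linarith)
        (hall 0 (by decide)) (hall 1 (by decide)) (hall 2 (by decide))
    refine ⟨0, 1, by decide, fun k => ?_⟩
    fin_cases k
    · exact iff_of_true hP0 (by decide)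
    · exact iff_of_true hP1 (by decide)
    · exact iff_of_false hN2 (by decide)
    · exact iff_of_false hN3 (by decide)
  · -- t3 - t1 > π, t2 - t0 < π : colopsided are {2, 3}
    have hP2 : AngColop t (Finset.univ.erase 2) := by
      apply angColop_of_bounds t _ ⟨0, by decide⟩ (-((t 3 - 2 * Real.pi + t 1) / 2))
      intro k hk; fin_cases hk
      · exact cos_pos' (t 0) (by linarith) (by linarith) (Or.inl rfl)
      · exact cos_pos' (t 1) (by linarith) (by linarith) (Or.inl rfl)
      · exact cos_pos' (t 3 - 2 * Real.pi) (by linarith) (by linarith) (Or.inr (Or.inr rfl))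
    have hP3 : AngColop t (Finset.univ.erase 3) := by
      apply angColop_of_bounds t _ ⟨0, by decide⟩ (-((t 0 + t 2) / 2))
      intro k hk; fin_cases hk
      · exact cos_pos' (t 0) (by linarith) (by linarith) (Or.inl rfl)
      · exact cos_pos' (t 1) (by linarith) (by linarith) (Or.inl rfl)
      · exact cos_pos' (t 2) (by linarith) (by linarith) (Or.inl rfl)
    have hN0 : ¬ AngColop t (Finset.univ.erase 0) := by
      rintro ⟨φ, hall, -⟩
      exact neg_core (r1 := t 1) (r2 := t 2) (r3 := t 3) h12 hg12 hg23 h13 (by linarith)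
        (hall 1 (by decide)) (hall 2 (by decide)) (hall 3 (by decide))
    have hN1 : ¬ AngColop t (Finset.univ.erase 1) := by
      rintro ⟨φ, hall, -⟩
      have c2 := hall 2 (by decide)
      have c3 := hall 3 (by decide)
      have c2' : 0 ≤ Real.cos (φ + (t 2 - 2 * Real.pi)) := by
        rwa [show φ + (t 2 - 2 * Real.pi) = φ + t 2 - 2 * Real.pi by ring,
          Real.cos_sub_two_pi]
      have c3' : 0 ≤ Real.cos (φ + (t 3 - 2 * Real.pi)) := by
        rwa [show φ + (t 3 - 2 * Real.pi) = φ + t 3 - 2 * Real.pi by ring,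
          Real.cos_sub_two_pi]
      exact neg_core (r1 := t 2 - 2 * Real.pi) (r2 := t 3 - 2 * Real.pi) (r3 := t 0)
        (by linarith) (by linarith) (by linarith) (by linarith) (by linarith) c2' c3'
        (hall 0 (by decide))
    refine ⟨2, 3, by decide, fun k => ?_⟩
    fin_cases k
    · exact iff_of_false hN0 (by decide)
    · exact iff_of_false hN1 (by decide)
    · exact iff_of_true hP2 (by decide)
    · exact iff_of_true hP3 (by decide)
  · -- t3 - t1 > π, t2 - t0 > π : colopsided are {1, 2}
    have hP1 : AngColop t (Finset.univ.erase 1) := by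
      apply angColop_of_bounds t _ ⟨0, by decide⟩ (-((t 2 - 2 * Real.pi + t 0) / 2))
      intro k hk; fin_cases hk
      · exact cos_pos' (t 0) (by linarith) (by linarith) (Or.inl rfl)
      · exact cos_pos' (t 2 - 2 * Real.pi) (by linarith) (by linarith) (Or.inr (Or.inr rfl))
      · exact cos_pos' (t 3 - 2 * Real.pi) (by linarith) (by linarith) (Or.inr (Or.inr rfl))
    have hP2 : AngColop t (Finset.univ.erase 2) := by
      apply angColop_of_bounds t _ ⟨0, by decide⟩ (-((t 3 - 2 * Real.pi + t 1) / 2))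
      intro k hk; fin_cases hk
      · exact cos_pos' (t 0) (by linarith) (by linarith) (Or.inl rfl)
      · exact cos_pos' (t 1) (by linarith) (by linarith) (Or.inl rfl)
      · exact cos_pos' (t 3 - 2 * Real.pi) (by linarith) (by linarith) (Or.inr (Or.inr rfl))
    have hN0 : ¬ AngColop t (Finset.univ.erase 0) := by
      rintro ⟨φ, hall, -⟩
      exact neg_core (r1 := t 1) (r2 := t 2) (r3 := t 3) h12 hg12 hg23 h13 (by linarith)
        (hall 1 (by decide)) (hall 2 (by decide)) (hall 3 (by decide))
    have hN3 : ¬ AngColop t (Finset.univ.erase 3) := by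
      rintro ⟨φ, hall, -⟩
      exact neg_core (r1 := t 0) (r2 := t 1) (r3 := t 2) h01 hg01 hg12 h20 (by linarith)
        (hall 0 (by decide)) (hall 1 (by decide)) (hall 2 (by decide))
    refine ⟨1, 2, by decide, fun k => ?_⟩
    fin_cases k
    · exact iff_of_false hN0 (by decide)
    · exact iff_of_true hP1 (by decide)
    · exact iff_of_true hP2 (by decide)
    · exact iff_of_false hN3 (by decide)

end TwoTrunc


/-- If no two of the rotated unit coefficients `f̂_k(θ)` are antipodal and
`f` is not colopsided at `θ`, then exactly two of the four truncated trinomials are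
colopsided at `θ`. -/
theorem two_truncations_colopsided (a : Fin 4 → Fin 2 → ℤ) (ha : NondegCircuit a)
    (f : Fin 4 → ℂ) (hf : ∀ k, f k ≠ 0) (θ : Fin 2 → ℝ)
    (hgen : ∀ j k, j ≠ k → fhat (a j) (f j) θ ≠ -fhat (a k) (f k) θ)
    (hnl : ¬ ColopsidedOn a f Finset.univ θ) :
    Set.ncard {k : Fin 4 | ColopsidedOn a f (Finset.univ.erase k) θ} = 2 := by
  classical
  set t : Fin 4 → ℝ :=
    fun k => (f k * Complex.exp ((∑ i, (a k i : ℝ) * θ i) * Complex.I)).arg with ht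
  have hbridge : ∀ s, ColopsidedOn a f s θ ↔ TwoTrunc.AngColop t s := by
    intro s; rw [ht]; exact TwoTrunc.colop_iff a f hf θ s
  have hanti : ∀ j k : Fin 4, j ≠ k → t j - t k ≠ Real.pi := by
    intro j k hjk h
    apply hgen j k hjk
    rw [TwoTrunc.fhat_eq (a j) (f j) (hf j) θ, TwoTrunc.fhat_eq (a k) (f k) (hf k) θ]
    exact TwoTrunc.anti_of_diff_pi h
  have hrange : ∀ k, t k ∈ Set.Ioc (-Real.pi) Real.pi := fun k => Complex.arg_mem_Ioc _
  obtain ⟨i, j, hij, hiff⟩ := TwoTrunc.core (t ∘ Tuple.sort t) (Tuple.monotone_sort t)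
    (fun k => hrange _)
    (fun j k hjk => hanti _ _ (fun h => hjk ((Tuple.sort t).injective h)))
    (by
      rw [TwoTrunc.angColop_reindex, Finset.image_univ_equiv]
      intro hcol
      exact hnl ((hbridge Finset.univ).mpr hcol))
  have hset : {k : Fin 4 | ColopsidedOn a f (Finset.univ.erase k) θ}
      = {Tuple.sort t i, Tuple.sort t j} := by
    ext k
    rw [Set.mem_setOf_eq, hbridge]
    have h1 : TwoTrunc.AngColop t (Finset.univ.erase k)
        ↔ TwoTrunc.AngColop (t ∘ Tuple.sort t)
            (Finset.univ.erase ((Tuple.sort t).symm k)) := by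
      rw [TwoTrunc.angColop_reindex, TwoTrunc.image_erase_univ, Equiv.apply_symm_apply]
    rw [h1, hiff, Equiv.symm_apply_eq, Equiv.symm_apply_eq]
    simp [Set.mem_insert_iff]
  rw [hset]
  exact Set.ncard_pair (fun h => hij ((Tuple.sort t).injective h))
end

section
/- Let A = {a_0, a_1, a_2, a_3} ⊂ ℤ² be a nondegenerate planar circuit, f_1, f_2, f_3, f_4 ∈ ℂ∖{0}, and consider the system F_1(z) = f_1 z^{a_0} + z^{a_2} + f_2 z^{a_3}, F_2(z) = f_3 z^{a_1} + z^{a_2} + f_4 z^{a_3}. If θ ∈ T² is such that not both F_1 and F_2 are real at θ, then the system F_1(z) = F_2(z) = 0 has at most one solution z ∈ (ℂ∖{0})² with Arg(z) = θ. -/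
open MeasureTheory Complex

section Aux

private lemma circle_eq' {p x y : ℝ} (h : (x : AddCircle p) = y) :
    ∃ n : ℤ, x = y + n * p := by
  have h2 : x - y ∈ AddSubgroup.zmultiples p := by
    rwa [← QuotientAddGroup.eq_iff_sub_mem]
  obtain ⟨n, hn⟩ := AddSubgroup.mem_zmultiples_iff.mp h2
  exact ⟨n, by simp [zsmul_eq_mul] at hn; linarith⟩

private lemma zpow_decomp' (x : ℂ) (θ₀ : ℝ) (n : ℤ) (h : x.arg = θ₀ + n * (2 * Real.pi))
    (m : ℤ) :
    x ^ m = ((‖x‖ ^ m : ℝ) : ℂ) * Complex.exp (((m : ℝ) * θ₀ : ℝ) * Complex.I) := by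
  conv_lhs => rw [← Complex.norm_mul_exp_arg_mul_I x]
  rw [mul_zpow, ← Complex.exp_int_mul, h]
  push_cast
  rw [show (m : ℂ) * ((θ₀ + n * (2*Real.pi)) * I) =
      (m:ℝ)*θ₀*I + (m*n : ℤ) * (2*Real.pi*I) by push_cast; ring]
  rw [Complex.exp_add, Complex.exp_int_mul_two_pi_mul_I, mul_one]
  norm_num

private lemma lmon_decomp' {n : ℕ} (a : Fin n → ℤ) (z : Fin n → ℂ) (θ : Fin n → ℝ)
    (h : ∀ i, (((z i).arg : ℝ) : AddCircle (2 * Real.pi)) = θ i) :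
    lmon a z = ((∏ i, ‖z i‖ ^ a i : ℝ) : ℂ) *
      Complex.exp ((∑ i, (a i : ℝ) * θ i : ℝ) * Complex.I) := by
  have key : ∀ i, z i ^ a i = ((‖z i‖ ^ a i : ℝ) : ℂ) *
      Complex.exp (((a i : ℝ) * θ i : ℝ) * Complex.I) := by
    intro i
    obtain ⟨m, hm⟩ := circle_eq' (h i)
    exact zpow_decomp' _ _ _ hm _
  calc lmon a z = ∏ i, (((‖z i‖ ^ a i : ℝ) : ℂ) *
      Complex.exp (((a i : ℝ) * θ i : ℝ) * Complex.I)) :=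
        Finset.prod_congr rfl fun i _ => key i
    _ = _ := by
      rw [Finset.prod_mul_distrib, ← Complex.exp_sum]
      congr 1
      · push_cast; rfl
      · push_cast [Finset.sum_mul]; rfl

private lemma arg_eq_of_circle {x y : ℂ}
    (h : ((x.arg : ℝ) : AddCircle (2 * Real.pi)) = ((y.arg : ℝ) : AddCircle (2 * Real.pi))) :
    x.arg = y.arg := by
  obtain ⟨n, hn⟩ := circle_eq' h
  have h1 : (n : ℝ) < 1 := by
    nlinarith [Real.pi_pos, Complex.arg_le_pi x, Complex.neg_pi_lt_arg x,
      Complex.arg_le_pi y, Complex.neg_pi_lt_arg y]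
  have h2 : (-1 : ℝ) < (n : ℝ) := by
    nlinarith [Real.pi_pos, Complex.arg_le_pi x, Complex.neg_pi_lt_arg x,
      Complex.arg_le_pi y, Complex.neg_pi_lt_arg y]
  have h1' : n < 1 := by exact_mod_cast h1
  have h2' : (-1 : ℤ) < n := by exact_mod_cast h2
  have : n = 0 := by omega
  rw [this] at hn; simpa using hn

private lemma key2 (x0 x2 x3 : ℂ) (hx3 : x3 ≠ 0) (R0 R2 R3 S0 S2 S3 : ℝ)
    (h1 : (R0 : ℂ) * x0 + R2 * x2 + R3 * x3 = 0)
    (h2 : (S0 : ℂ) * x0 + S2 * x2 + S3 * x3 = 0) (hR2 : R2 ≠ 0) :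
    (S0 * R2 = S2 * R0 ∧ S3 * R2 = S2 * R3) ∨
      (∃ t0 t2 : ℝ, x0 = (t0 : ℂ) * x3 ∧ x2 = (t2 : ℂ) * x3) := by
  by_cases hc : S0 * R2 = S2 * R0
  · left
    refine ⟨hc, ?_⟩
    have hc' : (S0 : ℂ) * R2 = (S2 : ℂ) * R0 := by exact_mod_cast hc
    have h3 : ((S3 * R2 - S2 * R3 : ℝ) : ℂ) * x3 = 0 := by
      push_cast
      linear_combination (R2 : ℂ) * h2 - (S2 : ℂ) * h1 - x0 * hc'
    have := (mul_eq_zero.mp h3).resolve_right hx3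
    have : (S3 * R2 - S2 * R3 : ℝ) = 0 := by exact_mod_cast this
    linarith
  · right
    have hd : S0 * R2 - S2 * R0 ≠ 0 := sub_ne_zero.mpr hc
    have hdC : ((S0 * R2 - S2 * R0 : ℝ) : ℂ) ≠ 0 := by exact_mod_cast hd
    have hR2C : (R2 : ℂ) ≠ 0 := by exact_mod_cast hR2
    have hd2 : R0 * S2 - S0 * R2 ≠ 0 := fun h => hd (by linarith)
    have hd2C : ((R0 * S2 - S0 * R2 : ℝ) : ℂ) ≠ 0 := by exact_mod_cast hd2
    refine ⟨(S2 * R3 - S3 * R2) / (S0 * R2 - S2 * R0),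
      (S0 * R3 - S3 * R0) / (R0 * S2 - S0 * R2), ?_, ?_⟩
    · rw [show (((S2 * R3 - S3 * R2) / (S0 * R2 - S2 * R0) : ℝ) : ℂ)
          = ((S2 * R3 - S3 * R2 : ℝ) : ℂ) / ((S0 * R2 - S2 * R0 : ℝ) : ℂ) by push_cast; ring,
        div_mul_eq_mul_div, eq_div_iff hdC]
      push_cast
      linear_combination (R2 : ℂ) * h2 - (S2 : ℂ) * h1
    · rw [show (((S0 * R3 - S3 * R0) / (R0 * S2 - S0 * R2) : ℝ) : ℂ)
          = ((S0 * R3 - S3 * R0 : ℝ) : ℂ) / ((R0 * S2 - S0 * R2 : ℝ) : ℂ) by push_cast; ring,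
        div_mul_eq_mul_div, eq_div_iff hd2C]
      push_cast
      linear_combination (R0 : ℂ) * h2 - (S0 : ℂ) * h1

private lemma solve2 (p q r s u0 u1 : ℝ) (hd : p * s - q * r ≠ 0)
    (h1 : p * u0 + q * u1 = 0) (h2 : r * u0 + s * u1 = 0) : u0 = 0 ∧ u1 = 0 := by
  constructor
  · have : u0 * (p * s - q * r) = 0 := by linear_combination s * h1 - q * h2
    exact (mul_eq_zero.mp this).resolve_right hd
  · have : u1 * (p * s - q * r) = 0 := by linear_combination p * h2 - r * h1
    exact (mul_eq_zero.mp this).resolve_right hd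

end Aux

private lemma hatA0' (a : Fin 4 → Fin 2 → ℤ) (k : Fin 4) : hatA a 0 k = 1 := rfl
private lemma hatA1' (a : Fin 4 → Fin 2 → ℤ) (k : Fin 4) : hatA a 1 k = a k 0 := rfl
private lemma hatA2' (a : Fin 4 → Fin 2 → ℤ) (k : Fin 4) : hatA a 2 k = a k 1 := rfl

private lemma galeB_one (a : Fin 4 → Fin 2 → ℤ) : galeB a 1 =
    ((a 0 0 - a 2 0) * (a 3 1 - a 2 1) - (a 0 1 - a 2 1) * (a 3 0 - a 2 0)) := by
  simp [galeB, Matrix.det_fin_three, Fin.succAbove, Fin.lt_def, hatA0', hatA1', hatA2',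
    show (Fin.succ 2 : Fin 4) = 3 from rfl]
  ring

private lemma galeB_zero (a : Fin 4 → Fin 2 → ℤ) : galeB a 0 =
    -((a 1 0 - a 2 0) * (a 3 1 - a 2 1) - (a 1 1 - a 2 1) * (a 3 0 - a 2 0)) := by
  simp [galeB, Matrix.det_fin_three, Fin.succAbove, Fin.lt_def, hatA0', hatA1', hatA2',
    show (Fin.succ 2 : Fin 4) = 3 from rfl]
  ring

private lemma final_step (z w : Fin 2 → ℂ) (hz0 : ∀ i, z i ≠ 0) (hw0 : ∀ i, w i ≠ 0)
    (hargeq : ∀ i, (z i).arg = (w i).arg) (b c d : Fin 2 → ℤ)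
    (hdet : (b 0 - c 0) * (d 1 - c 1) - (b 1 - c 1) * (d 0 - c 0) ≠ 0)
    (h1 : (∏ i, ‖w i‖ ^ b i) * (∏ i, ‖z i‖ ^ c i)
        = (∏ i, ‖w i‖ ^ c i) * (∏ i, ‖z i‖ ^ b i))
    (h2 : (∏ i, ‖w i‖ ^ d i) * (∏ i, ‖z i‖ ^ c i)
        = (∏ i, ‖w i‖ ^ c i) * (∏ i, ‖z i‖ ^ d i)) :
    z = w := by
  have hzpos : ∀ i, 0 < ‖z i‖ := fun i => norm_pos_iff.mpr (hz0 i)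
  have hwpos : ∀ i, 0 < ‖w i‖ := fun i => norm_pos_iff.mpr (hw0 i)
  have hlog : ∀ (v : Fin 2 → ℂ), (∀ i, v i ≠ 0) → ∀ e : Fin 2 → ℤ,
      Real.log (∏ i, ‖v i‖ ^ e i)
        = ∑ i, (e i : ℝ) * Real.log (‖v i‖) := by
    intro v hv e
    rw [Real.log_prod (fun i _ => zpow_ne_zero _ (norm_ne_zero_iff.mpr (hv i)))]
    exact Finset.sum_congr rfl fun i _ => Real.log_zpow _ _
  have hprodpos : ∀ (v : Fin 2 → ℂ), (∀ i, 0 < ‖v i‖) → ∀ e : Fin 2 → ℤ,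
      (0 : ℝ) < ∏ i, ‖v i‖ ^ e i :=
    fun v hv e => Finset.prod_pos fun i _ => zpow_pos (hv i) _
  have l1 := congrArg Real.log h1
  have l2 := congrArg Real.log h2
  rw [Real.log_mul (ne_of_gt (hprodpos w hwpos b)) (ne_of_gt (hprodpos z hzpos c)),
    Real.log_mul (ne_of_gt (hprodpos w hwpos c)) (ne_of_gt (hprodpos z hzpos b)),
    hlog w hw0, hlog w hw0, hlog z hz0, hlog z hz0] at l1
  rw [Real.log_mul (ne_of_gt (hprodpos w hwpos d)) (ne_of_gt (hprodpos z hzpos c)),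
    Real.log_mul (ne_of_gt (hprodpos w hwpos c)) (ne_of_gt (hprodpos z hzpos d)),
    hlog w hw0, hlog w hw0, hlog z hz0, hlog z hz0] at l2
  simp only [Fin.sum_univ_two] at l1 l2
  set u0 : ℝ := Real.log (‖w 0‖) - Real.log (‖z 0‖) with hu0
  set u1 : ℝ := Real.log (‖w 1‖) - Real.log (‖z 1‖) with hu1
  have e1 : ((b 0 : ℝ) - c 0) * u0 + ((b 1 : ℝ) - c 1) * u1 = 0 := by
    rw [hu0, hu1]; linarith [l1]
  have e2 : ((d 0 : ℝ) - c 0) * u0 + ((d 1 : ℝ) - c 1) * u1 = 0 := by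
    rw [hu0, hu1]; linarith [l2]
  have hdet' : ((b 0 : ℝ) - c 0) * ((d 1 : ℝ) - c 1) - ((b 1 : ℝ) - c 1) * ((d 0 : ℝ) - c 0) ≠ 0 := by
    intro h
    apply hdet
    have : (((b 0 - c 0) * (d 1 - c 1) - (b 1 - c 1) * (d 0 - c 0) : ℤ) : ℝ) = 0 := by
      push_cast; linarith
    exact_mod_cast this
  obtain ⟨h0, h1'⟩ := solve2 _ _ _ _ _ _ hdet' e1 e2
  have habs : ∀ i, ‖z i‖ = ‖w i‖ := by
    intro i
    have hli : Real.log (‖z i‖) = Real.log (‖w i‖) := by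
      fin_cases i
      · rw [hu0] at h0; simp at h0 ⊢; linarith
      · rw [hu1] at h1'; simp at h1' ⊢; linarith
    exact Real.log_injOn_pos (Set.mem_Ioi.2 (hzpos i)) (Set.mem_Ioi.2 (hwpos i)) hli
  funext i
  exact Complex.ext_norm_arg (habs i) (hargeq i)

/-- If not both `F₁` and `F₂` are real at `θ`, then the circuit system
`F₁ = F₂ = 0` has at most one solution in the sector `Arg⁻¹(θ)`. -/
theorem nonreal_at_most_one_solution (a : Fin 4 → Fin 2 → ℤ) (ha : NondegCircuit a)
    (g : Fin 4 → ℂ) (hg : ∀ k, g k ≠ 0) (θ : Fin 2 → ℝ)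
    (hnr : ¬(RealAtMons [(g 0, a 0), (1, a 2), (g 1, a 3)] θ ∧
      RealAtMons [(g 2, a 1), (1, a 2), (g 3, a 3)] θ)) :
    Set.Subsingleton {z : Fin 2 → ℂ | (∀ i, z i ≠ 0) ∧
      sysF1 a g z = 0 ∧ sysF2 a g z = 0 ∧
      ∀ i, ((z i).arg : AddCircle (2 * Real.pi)) = ((θ i : ℝ) : AddCircle (2 * Real.pi))} := by
  intro z hz w hw
  obtain ⟨hz0, hzF1, hzF2, hzθ⟩ := hz
  obtain ⟨hw0, hwF1, hwF2, hwθ⟩ := hw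
  have hargeq : ∀ i, (z i).arg = (w i).arg := fun i =>
    arg_eq_of_circle ((hzθ i).trans (hwθ i).symm)
  set E : Fin 4 → ℂ := fun k =>
    Complex.exp (((∑ i, (a k i : ℝ) * θ i : ℝ) : ℂ) * Complex.I) with hE_def
  have hE : ∀ k, E k ≠ 0 := fun k => Complex.exp_ne_zero _
  set R : Fin 4 → ℝ := fun k => ∏ i, ‖z i‖ ^ a k i with hR_def
  set S : Fin 4 → ℝ := fun k => ∏ i, ‖w i‖ ^ a k i with hS_def
  have hRpos : ∀ k, 0 < R k := fun k =>
    Finset.prod_pos fun i _ => zpow_pos (norm_pos_iff.mpr (hz0 i)) _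
  have hSpos : ∀ k, 0 < S k := fun k =>
    Finset.prod_pos fun i _ => zpow_pos (norm_pos_iff.mpr (hw0 i)) _
  have hlz : ∀ k, lmon (a k) z = ((R k : ℝ) : ℂ) * E k := fun k =>
    lmon_decomp' (a k) z θ hzθ
  have hlw : ∀ k, lmon (a k) w = ((S k : ℝ) : ℂ) * E k := fun k =>
    lmon_decomp' (a k) w θ hwθ
  have e1z : (R 0 : ℂ) * (g 0 * E 0) + (R 2 : ℂ) * E 2 + (R 3 : ℂ) * (g 1 * E 3) = 0 := by
    have h := hzF1
    rw [sysF1, hlz 0, hlz 2, hlz 3] at h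
    linear_combination h
  have e1w : (S 0 : ℂ) * (g 0 * E 0) + (S 2 : ℂ) * E 2 + (S 3 : ℂ) * (g 1 * E 3) = 0 := by
    have h := hwF1
    rw [sysF1, hlw 0, hlw 2, hlw 3] at h
    linear_combination h
  have e2z : (R 1 : ℂ) * (g 2 * E 1) + (R 2 : ℂ) * E 2 + (R 3 : ℂ) * (g 3 * E 3) = 0 := by
    have h := hzF2
    rw [sysF2, hlz 1, hlz 2, hlz 3] at h
    linear_combination h
  have e2w : (S 1 : ℂ) * (g 2 * E 1) + (S 2 : ℂ) * E 2 + (S 3 : ℂ) * (g 3 * E 3) = 0 := by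
    have h := hwF2
    rw [sysF2, hlw 1, hlw 2, hlw 3] at h
    linear_combination h
  by_cases hr1 : RealAtMons [(g 0, a 0), (1, a 2), (g 1, a 3)] θ
  · -- F₂ is not real at θ; use the second equation
    have hr2 : ¬ RealAtMons [(g 2, a 1), (1, a 2), (g 3, a 3)] θ := fun h2 => hnr ⟨hr1, h2⟩
    rcases key2 (g 2 * E 1) (E 2) (g 3 * E 3) (mul_ne_zero (hg 3) (hE 3))
        (R 1) (R 2) (R 3) (S 1) (S 2) (S 3) e2z e2w (ne_of_gt (hRpos 2)) with
      ⟨hc1, hc2⟩ | ⟨t0, t2, ht0, ht2⟩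
    · have hdet : (a 1 0 - a 2 0) * (a 3 1 - a 2 1) - (a 1 1 - a 2 1) * (a 3 0 - a 2 0) ≠ 0 := by
        have h := ha 0
        rw [galeB_zero] at h
        omega
      exact final_step z w hz0 hw0 hargeq (a 1) (a 2) (a 3) hdet hc1 hc2
    · exfalso
      apply hr2
      refine ⟨g 3 * E 3, mul_ne_zero (hg 3) (hE 3), ?_⟩
      intro m hm
      simp only [List.mem_cons, List.not_mem_nil, or_false] at hm
      rcases hm with h | h | h <;> subst h
      · exact ⟨t0, ht0⟩
      · exact ⟨t2, by rw [one_mul]; exact ht2⟩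
      · exact ⟨1, by simp only [hE_def, Complex.ofReal_one, one_mul]⟩
  · -- F₁ is not real at θ; use the first equation
    rcases key2 (g 0 * E 0) (E 2) (g 1 * E 3) (mul_ne_zero (hg 1) (hE 3))
        (R 0) (R 2) (R 3) (S 0) (S 2) (S 3) e1z e1w (ne_of_gt (hRpos 2)) with
      ⟨hc1, hc2⟩ | ⟨t0, t2, ht0, ht2⟩
    · have hdet : (a 0 0 - a 2 0) * (a 3 1 - a 2 1) - (a 0 1 - a 2 1) * (a 3 0 - a 2 0) ≠ 0 := by
        have h := ha 1
        rw [galeB_one] at h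
        omega
      exact final_step z w hz0 hw0 hargeq (a 0) (a 2) (a 3) hdet hc1 hc2
    · exfalso
      apply hr1
      refine ⟨g 1 * E 3, mul_ne_zero (hg 1) (hE 3), ?_⟩
      intro m hm
      simp only [List.mem_cons, List.not_mem_nil, or_false] at hm
      rcases hm with h | h | h <;> subst h
      · exact ⟨t0, ht0⟩
      · exact ⟨t2, by rw [one_mul]; exact ht2⟩
      · exact ⟨1, by simp only [hE_def, Complex.ofReal_one, one_mul]⟩
end
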